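/- Let u : ℝᴺ → ℝᴺ be continuous, let K ≥ 0 and k ≥ 0, let T₁ ≤ T₂, and let φ : [T₁,T₂] → ℝᴺ be an admissible path with derivative g such that ‖u(φ(t))‖ ≤ K for all t ∈ [T₁,T₂] and (1/4)∫_{T₁}^{T₂} ‖g(t) − u(φ(t))‖² dt ≤ k. Then for all s₁, s₂ with T₁ ≤ s₁ ≤ s₂ ≤ T₂, ‖φ(s₂) − φ(s₁)‖ ≤ 2·√((s₂ − s₁)·k) + (s₂ − s₁)·K. (Uniform Hölder-type modulus of continuity for paths of bounded Freidlin–Wentzell action; this yields uniform equicontinuity of any family of paths with uniformly bounded actions and drifts.) -/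

import Mathlib

open MeasureTheory Set

/-- A path `φ : [T₁,T₂] → ℝᴺ` is admissible with derivative `g` if `g` is measurable with
square-integrable norm on `[T₁,T₂]` and `φ(t) = φ(T₁) + ∫_{T₁}^t g(s) ds` on `[T₁,T₂]`. -/
def IsAdmissiblePath (N : ℕ) (T₁ T₂ : ℝ)
    (φ g : ℝ → EuclideanSpace ℝ (Fin N)) : Prop :=
  Measurable g ∧
  MeasureTheory.IntegrableOn (fun t => ‖g t‖ ^ 2) (Set.Icc T₁ T₂) ∧
  ∀ t ∈ Set.Icc T₁ T₂, φ t = φ T₁ + ∫ s in T₁..t, g s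

/-- Uniform Hölder-type modulus of continuity for paths of bounded
Freidlin–Wentzell action: if `‖u(φ(t))‖ ≤ K` on `[T₁,T₂]` and the action is at most `k`,
then `‖φ(s₂) − φ(s₁)‖ ≤ 2√((s₂−s₁)k) + (s₂−s₁)K` for `T₁ ≤ s₁ ≤ s₂ ≤ T₂`. -/
theorem path_modulus_of_continuity (N : ℕ) (hN : 1 ≤ N)
    (u : EuclideanSpace ℝ (Fin N) → EuclideanSpace ℝ (Fin N)) (hu : Continuous u)
    (K k : ℝ) (hK : 0 ≤ K) (hk : 0 ≤ k)
    (T₁ T₂ : ℝ) (hT : T₁ ≤ T₂)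
    (φ g : ℝ → EuclideanSpace ℝ (Fin N))
    (hφ : IsAdmissiblePath N T₁ T₂ φ g)
    (hKbound : ∀ t ∈ Set.Icc T₁ T₂, ‖u (φ t)‖ ≤ K)
    (hact : (1 / 4) * (∫ t in Set.Icc T₁ T₂, ‖g t - u (φ t)‖ ^ 2) ≤ k) :
    ∀ s₁ s₂ : ℝ, T₁ ≤ s₁ → s₁ ≤ s₂ → s₂ ≤ T₂ →
      ‖φ s₂ - φ s₁‖ ≤ 2 * Real.sqrt ((s₂ - s₁) * k) + (s₂ - s₁) * K := by
  obtain ⟨hgm, hg2, hφeq⟩ := hφ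
  intro s₁ s₂ hs₁ hs hs₂
  set h : ℝ → EuclideanSpace ℝ (Fin N) := fun t => u (φ t) with hh
  have hsub : Icc s₁ s₂ ⊆ Icc T₁ T₂ := Icc_subset_Icc hs₁ hs₂
  haveI : IsFiniteMeasure (volume.restrict (Icc T₁ T₂)) :=
    ⟨by rw [Measure.restrict_apply_univ]; exact measure_Icc_lt_top⟩
  have hgsm : AEStronglyMeasurable g (volume.restrict (Icc T₁ T₂)) :=
    hgm.aestronglyMeasurable
  have hgL2 : MemLp g 2 (volume.restrict (Icc T₁ T₂)) :=
    (memLp_two_iff_integrable_sq_norm hgsm).mpr hg2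
  have hgint : IntegrableOn g (Icc T₁ T₂) :=
    hgL2.integrable (by norm_num)
  -- φ is continuous on [T₁, T₂]
  have hφcont : ContinuousOn φ (Icc T₁ T₂) := by
    have hint2 : IntegrableOn g (uIcc T₁ T₂) := by rwa [uIcc_of_le hT]
    have := (intervalIntegral.continuousOn_primitive_interval hint2).add
      (continuousOn_const (c := φ T₁))
    rw [uIcc_of_le hT] at this
    refine ContinuousOn.congr this fun t ht => ?_
    rw [hφeq t ht]; exact add_comm _ _
  have hhcont : ContinuousOn h (Icc T₁ T₂) := hu.comp_continuousOn hφcont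
  have hhsm : AEStronglyMeasurable h (volume.restrict (Icc T₁ T₂)) :=
    hhcont.aestronglyMeasurable measurableSet_Icc
  have hhL2 : MemLp h 2 (volume.restrict (Icc T₁ T₂)) :=
    MemLp.of_bound hhsm K <| by
      filter_upwards [ae_restrict_mem measurableSet_Icc] with t ht using hKbound t ht
  have hdL2 : MemLp (fun t => g t - h t) 2 (volume.restrict (Icc T₁ T₂)) := hgL2.sub hhL2
  have hd2 : IntegrableOn (fun t => ‖g t - h t‖ ^ 2) (Icc T₁ T₂) :=
    (memLp_two_iff_integrable_sq_norm hdL2.aestronglyMeasurable).mp hdL2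
  -- derivative integrabilities on subintervals
  have hgii : ∀ a b : ℝ, T₁ ≤ a → a ≤ b → b ≤ T₂ → IntervalIntegrable g volume a b := by
    intro a b ha hab hb
    have : IntegrableOn g (uIcc a b) := by
      rw [uIcc_of_le hab]; exact hgint.mono_set (Icc_subset_Icc ha hb)
    exact this.intervalIntegrable
  -- φ s₂ - φ s₁ = ∫_{s₁}^{s₂} g
  have hkey : φ s₂ - φ s₁ = ∫ t in s₁..s₂, g t := by
    rw [hφeq s₂ ⟨hs₁.trans hs, hs₂⟩, hφeq s₁ ⟨hs₁, hs.trans hs₂⟩]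
    have := intervalIntegral.integral_interval_sub_left
      (hgii T₁ s₂ le_rfl (hs₁.trans hs) hs₂) (hgii T₁ s₁ le_rfl hs₁ (hs.trans hs₂))
    rw [← this]; abel
  -- split g = (g - h) + h
  have hhint : IntegrableOn h (Icc s₁ s₂) :=
    ((hhcont.mono hsub).integrableOn_Icc)
  have hhii : IntervalIntegrable h volume s₁ s₂ := by
    have : IntegrableOn h (uIcc s₁ s₂) := by rwa [uIcc_of_le hs]
    exact this.intervalIntegrable
  have hdii : IntervalIntegrable (fun t => g t - h t) volume s₁ s₂ :=
    (hgii s₁ s₂ hs₁ hs hs₂).sub hhii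
  have hsplit : (∫ t in s₁..s₂, g t) =
      (∫ t in s₁..s₂, (g t - h t)) + ∫ t in s₁..s₂, h t := by
    rw [← intervalIntegral.integral_add hdii hhii]
    simp
  -- bound the drift part
  have hdrift : ‖∫ t in s₁..s₂, h t‖ ≤ (s₂ - s₁) * K := by
    have := intervalIntegral.norm_integral_le_of_norm_le_const
      (a := s₁) (b := s₂) (C := K) (f := h) (fun x hx => by
        rw [uIoc_of_le hs] at hx
        exact hKbound x ⟨hs₁.trans hx.1.le, hx.2.trans hs₂⟩)
    rwa [abs_of_nonneg (by linarith), mul_comm] at this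
  -- bound the action part via Cauchy–Schwarz
  have hI4k : (∫ t in Icc s₁ s₂, ‖g t - h t‖ ^ 2) ≤ 4 * k := by
    have hmono : (∫ t in Icc s₁ s₂, ‖g t - h t‖ ^ 2) ≤
        ∫ t in Icc T₁ T₂, ‖g t - h t‖ ^ 2 := by
      refine setIntegral_mono_set hd2 ?_ (HasSubset.Subset.eventuallyLE hsub)
      filter_upwards with t using sq_nonneg _
    linarith
  have hInonneg : 0 ≤ ∫ t in Icc s₁ s₂, ‖g t - h t‖ ^ 2 :=
    setIntegral_nonneg measurableSet_Icc fun t _ => sq_nonneg _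
  have haction : ‖∫ t in s₁..s₂, (g t - h t)‖ ≤ 2 * Real.sqrt ((s₂ - s₁) * k) := by
    have h1 : ‖∫ t in s₁..s₂, (g t - h t)‖ ≤ ∫ t in Icc s₁ s₂, ‖g t - h t‖ := by
      rw [intervalIntegral.integral_of_le hs, ← integral_Icc_eq_integral_Ioc]
      exact norm_integral_le_integral_norm _
    haveI : IsFiniteMeasure (volume.restrict (Icc s₁ s₂)) :=
      ⟨by rw [Measure.restrict_apply_univ]; exact measure_Icc_lt_top⟩
    have hdL2' : MemLp (fun t => g t - h t) 2 (volume.restrict (Icc s₁ s₂)) :=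
      hdL2.mono_measure (Measure.restrict_mono hsub le_rfl)
    have hof : (ENNReal.ofReal (2:ℝ)) = 2 := by norm_num
    have hCS := integral_mul_le_Lp_mul_Lq_of_nonneg (μ := volume.restrict (Icc s₁ s₂))
      (p := 2) (q := 2) ⟨by norm_num, by norm_num, by norm_num⟩
      (f := fun t => ‖g t - h t‖) (g := fun _ => (1:ℝ))
      (Filter.Eventually.of_forall fun t => norm_nonneg _)
      (Filter.Eventually.of_forall fun t => zero_le_one)
      (by rw [hof]; exact hdL2'.norm)
      (by rw [hof]; exact memLp_const 1)
    have h2 : ∀ x : ℝ, x ^ (2:ℝ) = x ^ (2:ℕ) := fun x => by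
      rw [show ((2:ℝ)) = ((2:ℕ):ℝ) by norm_num, Real.rpow_natCast]
    simp only [mul_one, h2, one_pow] at hCS
    have hvol : (∫ _t in Icc s₁ s₂, (1:ℝ)) = s₂ - s₁ := by
      rw [setIntegral_const, smul_eq_mul, mul_one, Measure.real, Real.volume_Icc,
        ENNReal.toReal_ofReal (by linarith)]
    rw [hvol] at hCS
    have hpow : (∫ t in Icc s₁ s₂, ‖g t - h t‖ ^ (2:ℕ)) ^ (1/(2:ℝ)) ≤ (4*k) ^ (1/(2:ℝ)) :=
      Real.rpow_le_rpow hInonneg hI4k (by norm_num)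
    have hfin : (∫ t in Icc s₁ s₂, ‖g t - h t‖) ≤ (4*k) ^ (1/(2:ℝ)) * (s₂-s₁) ^ (1/(2:ℝ)) := by
      refine hCS.trans (mul_le_mul_of_nonneg_right hpow ?_)
      exact Real.rpow_nonneg (by linarith) _
    rw [← Real.sqrt_eq_rpow, ← Real.sqrt_eq_rpow] at hfin
    have : Real.sqrt (4*k) * Real.sqrt (s₂-s₁) = 2 * Real.sqrt ((s₂-s₁)*k) := by
      rw [show (4:ℝ)*k = 2^2*k by ring,
        Real.sqrt_mul (by positivity : (0:ℝ) ≤ 2^2) k,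
        Real.sqrt_sq (by norm_num : (0:ℝ) ≤ 2), mul_assoc, mul_comm (Real.sqrt k),
        ← Real.sqrt_mul (by linarith : (0:ℝ) ≤ s₂-s₁) k]
    linarith [hfin, h1, this.le, this.ge]
  calc ‖φ s₂ - φ s₁‖ = ‖(∫ t in s₁..s₂, (g t - h t)) + ∫ t in s₁..s₂, h t‖ := by
        rw [hkey, hsplit]
    _ ≤ ‖∫ t in s₁..s₂, (g t - h t)‖ + ‖∫ t in s₁..s₂, h t‖ := norm_add_le _ _
    _ ≤ 2 * Real.sqrt ((s₂ - s₁) * k) + (s₂ - s₁) * K := add_le_add haction hdrift
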